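/- For the Gumbel distribution with c > 0, the asymptotic δ-record probability is p_δ(c) = (1 − e^{−c}) / (e^{δ}e^{−c} + 1 − e^{−c}), and this is a logistic function of −δ. -/

import Mathlib

open MeasureTheory Real Set

lemma key_integral (b : ℝ) (hb : 0 < b) :
    (∫ x : ℝ, exp (-(b * exp (-x))) * exp (-x)) = 1 / b := by
  have hderiv : ∀ x ∈ (univ : Set ℝ),
      HasDerivWithinAt (fun x : ℝ => exp (-x)) (-exp (-x)) univ x := by
    intro x _
    have h : HasDerivAt (fun x : ℝ => exp (-x)) (-exp (-x)) x := by
      simpa using (hasDerivAt_neg x).exp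
    exact h.hasDerivWithinAt
  have hinj : InjOn (fun x : ℝ => exp (-x)) univ := by
    intro x _ y _ h
    have := exp_injective h
    linarith [neg_injective this]
  have himg : (fun x : ℝ => exp (-x)) '' univ = Ioi 0 := by
    ext t
    simp only [image_univ, mem_range, mem_Ioi]
    constructor
    · rintro ⟨x, rfl⟩; exact exp_pos _
    · intro ht; exact ⟨-log t, by rw [neg_neg, exp_log ht]⟩
  have h := integral_image_eq_integral_abs_deriv_smul (f := fun x : ℝ => exp (-x))
      (f' := fun x : ℝ => -exp (-x)) MeasurableSet.univ hderiv hinj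
      (fun t => exp (-(b * t)))
  rw [himg] at h
  have hG : (∫ t : ℝ in Ioi 0, exp (-(b * t))) = 1 / b := by
    have := integral_rpow_mul_exp_neg_mul_Ioi (a := 1) (r := b) one_pos hb
    simpa [Real.Gamma_one] using this
  rw [hG] at h
  rw [h, setIntegral_univ]
  refine integral_congr_ae (Filter.Eventually.of_forall fun x => ?_)
  have habs : |(-exp (-x))| = exp (-x) := by
    rw [abs_neg, abs_of_pos (exp_pos _)]
  simp [habs, mul_comm]

/-- Gumbel LDM with `c > 0`: the asymptotic δ-record probability is
`p_δ(c) = (1 − e^{−c}) / (e^{δ}e^{−c} + 1 − e^{−c})`, which is a logistic function of `−δ`: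
`p_δ(c) = 1 / (1 + (e^{−c}/(1−e^{−c})) e^{δ})`. -/
theorem stmt9 (c δ : ℝ) (hc : 0 < c) :
    (∫ x : ℝ, (∏' i : ℕ, exp (-exp (-(x + c * (i + 1) - δ)))) *
        (exp (-x) * exp (-exp (-x))))
      = (1 - exp (-c)) / (exp δ * exp (-c) + 1 - exp (-c)) ∧
    (1 - exp (-c)) / (exp δ * exp (-c) + 1 - exp (-c))
      = 1 / (1 + (exp (-c) / (1 - exp (-c))) * exp δ) := by
  have hr0 : 0 < exp (-c) := exp_pos _
  have hr1 : exp (-c) < 1 := by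
    rw [← exp_zero]
    exact exp_lt_exp.mpr (by linarith)
  have hr1' : (0:ℝ) < 1 - exp (-c) := by linarith
  set r : ℝ := exp (-c) with hrdef
  set s : ℝ := r / (1 - r) with hs
  have hs0 : 0 < s := div_pos hr0 hr1'
  set b : ℝ := 1 + exp δ * s with hb
  have hb0 : 0 < b := by positivity
  have hprod : ∀ x : ℝ, (∏' i : ℕ, exp (-exp (-(x + c * (i + 1) - δ))))
      = exp (-(exp (δ - x) * s)) := by
    intro x
    have hgeo : HasSum (fun i : ℕ => -(exp (δ - x) * r * r ^ i))
        (-(exp (δ - x) * r * (1 - r)⁻¹)) :=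
      ((hasSum_geometric_of_lt_one hr0.le hr1).mul_left (exp (δ - x) * r)).neg
    have hsum : HasSum (fun i : ℕ => -exp (-(x + c * (i + 1) - δ)))
        (-(exp (δ - x) * s)) := by
      have hval : -(exp (δ - x) * s) = -(exp (δ - x) * r * (1 - r)⁻¹) := by
        rw [hs, div_eq_mul_inv]; ring
      rw [hval]
      refine hgeo.congr_fun fun i => ?_
      have h1 : exp (δ - x) * r * r ^ i = exp (-(x + c * (i + 1) - δ)) := by
        rw [hrdef, ← exp_nat_mul, ← exp_add, ← exp_add]
        ring_nf
      rw [h1]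
    have h2 : HasProd (fun i : ℕ => exp (-exp (-(x + c * (i + 1) - δ))))
        (exp (-(exp (δ - x) * s))) := hsum.rexp
    exact h2.tprod_eq
  have hintegrand : ∀ x : ℝ,
      (∏' i : ℕ, exp (-exp (-(x + c * (i + 1) - δ)))) * (exp (-x) * exp (-exp (-x)))
        = exp (-(b * exp (-x))) * exp (-x) := by
    intro x
    have he : exp (δ - x) = exp δ * exp (-x) := by
      rw [← exp_add]; congr 1 <;> ring
    calc (∏' i : ℕ, exp (-exp (-(x + c * (i + 1) - δ)))) * (exp (-x) * exp (-exp (-x)))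
        = exp (-(exp (δ - x) * s)) * (exp (-x) * exp (-exp (-x))) := by rw [hprod x]
      _ = exp (-(exp (δ - x) * s) + -exp (-x) + -x) := by rw [exp_add, exp_add]; ring
      _ = exp (-(b * exp (-x)) + -x) := by rw [he, hb]; congr 1 <;> ring
      _ = exp (-(b * exp (-x))) * exp (-x) := by rw [exp_add]
  have hmain : (∫ x : ℝ, (∏' i : ℕ, exp (-exp (-(x + c * (i + 1) - δ)))) *
      (exp (-x) * exp (-exp (-x)))) = 1 / b := by
    rw [← key_integral b hb0]
    exact integral_congr_ae (Filter.Eventually.of_forall hintegrand)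
  have hne : (1:ℝ) - r ≠ 0 := hr1'.ne'
  have hd1 : exp δ * r + 1 - r ≠ 0 := ne_of_gt (by nlinarith [exp_pos δ])
  have hd2 : 1 + r / (1 - r) * exp δ ≠ 0 := ne_of_gt (by positivity)
  have h1 : 1 / b = (1 - r) / (exp δ * r + 1 - r) := by
    rw [hb, hs, div_eq_div_iff (by positivity) (by nlinarith [exp_pos δ])]
    field_simp
    ring
  have h2 : (1 - r) / (exp δ * r + 1 - r) = 1 / (1 + r / (1 - r) * exp δ) := by
    rw [div_eq_div_iff (by nlinarith [exp_pos δ]) (by positivity)]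
    field_simp
    ring
  exact ⟨hmain.trans h1, h2⟩
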